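/- Let T be the triangle with vertices (0,0), ((s_1/t_1)(a/b), a/b), ((s_2/t_2)(a/b), a/b), with a,b,t_1,t_2 positive integers, s_1,s_2 integers, s_2/t_2 > s_1/t_1, and all fractions in lowest terms. Then for all rational r with 0 <= r < b·lcm(t_1,t_2), |Q_1(T,r)| <= Q_1(T,0). Moreover Q_1(T,r) >= -Q_1(T,0) + (a/(b t_1)) + (a/(b t_2)). -/

import Mathlib

open Pointwise

/-- A point of `ℚⁿ` is a lattice point if all its coordinates are integers. -/
def IsLatticePt {n : ℕ} (x : Fin n → ℚ) : Prop := ∀ i, ∃ z : ℤ, x i = (z : ℚ)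

/-- The number of lattice points in the dilate `r • P`. -/
noncomputable def latticeCount {n : ℕ} (P : Set (Fin n → ℚ)) (r : ℚ) : ℕ :=
  Set.ncard {x | x ∈ r • P ∧ IsLatticePt x}

/-- A rational polytope: the convex hull of finitely many rational points. -/
def IsRatPolytope {n : ℕ} (P : Set (Fin n → ℚ)) : Prop :=
  ∃ V : Finset (Fin n → ℚ), P = convexHull ℚ (V : Set (Fin n → ℚ))

/-- The dimension of a set, as the dimension of its affine hull. -/
noncomputable def polyDim {n : ℕ} (P : Set (Fin n → ℚ)) : ℕ :=
  Module.finrank ℚ (vectorSpan ℚ P)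

/-- `F` is a face of the polytope `P`. -/
def IsFace {n : ℕ} (P F : Set (Fin n → ℚ)) : Prop :=
  F = P ∨ ∃ (f : (Fin n → ℚ) →ₗ[ℚ] ℚ) (c : ℚ),
    (∀ x ∈ P, f x ≤ c) ∧ F = {x | x ∈ P ∧ f x = c}

/-- `F` is an `i`-dimensional (nonempty) face of `P`. -/
def IsIFace {n : ℕ} (P F : Set (Fin n → ℚ)) (i : ℕ) : Prop :=
  IsFace P F ∧ F.Nonempty ∧ polyDim F = i

/-- The dilated affine hull `r • aff(F)` contains a lattice point. -/
def DilAffHasLattice {n : ℕ} (F : Set (Fin n → ℚ)) (r : ℚ) : Prop :=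
  ∃ x ∈ r • (affineSpan ℚ F : Set (Fin n → ℚ)), IsLatticePt x

/-- `k` is the `i`-index `d_i(P)`: the smallest positive integer such that
`k • aff(F)` contains a lattice point for every `i`-face `F` of `P`. -/
def IsIIndex {n : ℕ} (P : Set (Fin n → ℚ)) (i : ℕ) (k : ℕ) : Prop :=
  0 < k ∧ (∀ F, IsIFace P F i → DilAffHasLattice F (k : ℚ)) ∧
    ∀ k' : ℕ, 0 < k' → (∀ F, IsIFace P F i → DilAffHasLattice F (k' : ℚ)) → k ≤ k'

/-- `q` is the rational `i`-index `rd_i(P)`: the smallest positive rational such that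
`q • aff(F)` contains a lattice point for every `i`-face `F` of `P`. -/
def IsRatIIndex {n : ℕ} (P : Set (Fin n → ℚ)) (i : ℕ) (q : ℚ) : Prop :=
  0 < q ∧ (∀ F, IsIFace P F i → DilAffHasLattice F q) ∧
    ∀ q' : ℚ, 0 < q' → (∀ F, IsIFace P F i → DilAffHasLattice F q') → q ≤ q'

/-- An integral polytope: the convex hull of finitely many lattice points. -/
def IsIntegralPolytope {n : ℕ} (P : Set (Fin n → ℚ)) : Prop :=
  ∃ V : Finset (Fin n → ℚ), (∀ v ∈ V, IsLatticePt v) ∧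
    P = convexHull ℚ (V : Set (Fin n → ℚ))

/-- `q` is the rational denominator `q(P)`: the smallest positive rational such that
`q • P` is an integral polytope. -/
def IsRatDenom {n : ℕ} (P : Set (Fin n → ℚ)) (q : ℚ) : Prop :=
  0 < q ∧ IsIntegralPolytope (q • P) ∧
    ∀ q' : ℚ, 0 < q' → IsIntegralPolytope (q' • P) → q ≤ q'

/-- `f` is periodic with period `d`. -/
def IsPeriodic (f : ℚ → ℚ) (d : ℚ) : Prop := ∀ r, f (r + d) = f r

/-- `Q` is a family of coefficient functions of the rational Ehrhart quasi-polynomial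
of `P` (of degree `d`): each `Q i` is periodic with some positive period and
`#(rP ∩ ℤⁿ) = ∑_{i=0}^{d} Q_i(P,r) rⁱ` for all rational `r ≥ 0`. -/
def IsRatEhrhartCoeffs {n : ℕ} (P : Set (Fin n → ℚ)) (d : ℕ) (Q : ℕ → ℚ → ℚ) : Prop :=
  (∀ i, ∃ p : ℚ, 0 < p ∧ IsPeriodic (Q i) p) ∧
  ∀ r : ℚ, 0 ≤ r → (latticeCount P r : ℚ) = ∑ i ∈ Finset.range (d + 1), Q i r * r ^ i

/-- `G` is the family of coefficient functions of the classical Ehrhart quasi-polynomial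
of `P` (of degree `d`): each `G i` is periodic with some positive integer period and
`#(kP ∩ ℤⁿ) = ∑_{i=0}^{d} G_i(P,k) kⁱ` for all integers `k ≥ 0`. -/
def IsEhrhartCoeffs {n : ℕ} (P : Set (Fin n → ℚ)) (d : ℕ) (G : ℕ → ℕ → ℚ) : Prop :=
  (∀ i, ∃ p : ℕ, 0 < p ∧ ∀ k, G i (k + p) = G i k) ∧
  ∀ k : ℕ, (latticeCount P (k : ℚ) : ℚ) = ∑ i ∈ Finset.range (d + 1), G i k * (k : ℚ) ^ i

/-- The triangle `T = conv((0,0), ((s₁/t₁)(a/b), a/b), ((s₂/t₂)(a/b), a/b))`. -/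
def Tri (a b : ℕ) (s1 s2 : ℤ) (t1 t2 : ℕ) : Set (Fin 2 → ℚ) :=
  convexHull ℚ {![0, 0], ![((s1 : ℚ) / t1) * ((a : ℚ) / b), (a : ℚ) / b],
    ![((s2 : ℚ) / t2) * ((a : ℚ) / b), (a : ℚ) / b]}


lemma periodic_mul_nat (f : ℚ → ℚ) (d : ℚ) (hf : ∀ r, f (r + d) = f r) (k : ℕ) (x : ℚ) :
    f (x + (k:ℚ)*d) = f x := by
  induction k with
  | zero => simp
  | succ m ih =>
    have : x + ((m+1:ℕ):ℚ)*d = (x + (m:ℚ)*d) + d := by push_cast; ring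
    rw [this, hf, ih]

lemma num_mul_den (q : ℚ) : (q.num:ℚ) = q * (q.den:ℚ) :=
  (div_eq_iff (by exact_mod_cast q.den_nz : ((q.den:ℕ):ℚ) ≠ 0)).mp (Rat.num_div_den q)

lemma exists_nat_mult (q1 q2 q3 w : ℚ) (h1 : 0 < q1) (h2 : 0 < q2) (h3 : 0 < q3) (hw : 0 < w) :
    ∃ (W : ℚ) (k1 k2 k3 kw : ℕ), 0 < W ∧ W = (k1:ℚ)*q1 ∧ W = (k2:ℚ)*q2 ∧ W = (k3:ℚ)*q3 ∧
      W = (kw:ℚ)*w := by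
  have hn1 : 0 < q1.num := Rat.num_pos.mpr h1
  have hn2 : 0 < q2.num := Rat.num_pos.mpr h2
  have hn3 : 0 < q3.num := Rat.num_pos.mpr h3
  have hnw : 0 < w.num := Rat.num_pos.mpr hw
  set n1 := q1.num.toNat; set n2 := q2.num.toNat; set n3 := q3.num.toNat; set nw := w.num.toNat
  set d1 := q1.den; set d2 := q2.den; set d3 := q3.den; set dw := w.den
  have hc1 : ((n1:ℕ):ℚ) = (q1.num:ℚ) :=
    by exact_mod_cast congrArg (fun z : ℤ => (z:ℚ)) (Int.toNat_of_nonneg hn1.le)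
  have hc2 : ((n2:ℕ):ℚ) = (q2.num:ℚ) :=
    by exact_mod_cast congrArg (fun z : ℤ => (z:ℚ)) (Int.toNat_of_nonneg hn2.le)
  have hc3 : ((n3:ℕ):ℚ) = (q3.num:ℚ) :=
    by exact_mod_cast congrArg (fun z : ℤ => (z:ℚ)) (Int.toNat_of_nonneg hn3.le)
  have hcw : ((nw:ℕ):ℚ) = (w.num:ℚ) :=
    by exact_mod_cast congrArg (fun z : ℤ => (z:ℚ)) (Int.toNat_of_nonneg hnw.le)
  have hp1 : 0 < n1 := by simp only [n1]; omega
  have hp2 : 0 < n2 := by simp only [n2]; omega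
  have hp3 : 0 < n3 := by simp only [n3]; omega
  have hpw : 0 < nw := by simp only [nw]; omega
  have hd1 : 0 < d1 := q1.pos
  have hd2 : 0 < d2 := q2.pos
  have hd3 : 0 < d3 := q3.pos
  have hdw : 0 < dw := w.pos
  refine ⟨((n1*n2*n3*nw*d1*d2*d3*dw : ℕ):ℚ),
    d1*d1*n2*n3*nw*d2*d3*dw, d2*d2*n1*n3*nw*d1*d3*dw, d3*d3*n1*n2*nw*d1*d2*dw,
    dw*dw*n1*n2*n3*d1*d2*d3, ?_, ?_, ?_, ?_, ?_⟩
  · have : 0 < n1*n2*n3*nw*d1*d2*d3*dw := by positivity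
    exact_mod_cast this
  all_goals push_cast [hc1, hc2, hc3, hcw]
  · rw [num_mul_den q1]; push_cast [hc2, hc3, hcw]; ring
  · rw [num_mul_den q2]; push_cast [hc1, hc3, hcw]; ring
  · rw [num_mul_den q3]; push_cast [hc1, hc2, hcw]; ring
  · rw [num_mul_den w]; push_cast [hc1, hc2, hc3]; ring




lemma sum_Ico_id_nat (k : ℕ) : 2 * ∑ n ∈ Finset.Ico (0:ℤ) (k:ℤ), n = k * (k-1) := by
  induction k with
  | zero => simp
  | succ m ih =>
    push_cast
    rw [show ((m:ℤ)+1) = ((m:ℤ)+1) from rfl, ← Finset.Ico_union_Ico_eq_Ico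
      (by positivity : (0:ℤ) ≤ (m:ℤ)) (by linarith : (m:ℤ) ≤ (m:ℤ)+1),
      Finset.sum_union (Finset.Ico_disjoint_Ico_consecutive _ _ _),
      show Finset.Ico (m:ℤ) ((m:ℤ)+1) = {(m:ℤ)} by ext x; simp [Finset.mem_Ico]; omega,
      Finset.sum_singleton]
    push_cast at ih
    ring_nf
    ring_nf at ih
    omega

lemma sum_Ico_id (t : ℤ) (ht : 0 ≤ t) : 2 * ∑ n ∈ Finset.Ico (0:ℤ) t, n = t * (t-1) := by
  have := sum_Ico_id_nat t.toNat
  rwa [Int.toNat_of_nonneg ht] at this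

lemma emod_block (c t M : ℤ) (ht : 0 < t) (hc : IsCoprime c t) :
    2 * ∑ n ∈ Finset.Ico M (M+t), (c*n % t) = t * (t-1) := by
  obtain ⟨u, v, huv⟩ := hc
  rw [← sum_Ico_id t ht.le]
  congr 1
  apply Finset.sum_nbij' (fun n => c*n % t) (fun m => M + ((u*m - M) % t))
  · intro n hn
    simp only [Finset.mem_Ico] at *
    exact ⟨Int.emod_nonneg _ ht.ne', Int.emod_lt_of_pos _ ht⟩
  · intro m hm
    simp only [Finset.mem_Ico] at *
    have := Int.emod_nonneg (u*m - M) ht.ne'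
    have := Int.emod_lt_of_pos (u*m - M) ht
    omega
  · intro n hn
    simp only [Finset.mem_Ico] at hn
    have key : (u * (c*n % t) - M) % t = (n - M) % t := by
      have e1 : u * (c*n % t) - M ≡ u*(c*n) - M [ZMOD t] :=
        (Int.ModEq.mul_left u (Int.emod_emod_of_dvd (c*n) dvd_rfl)).sub_right M
      have e2 : u*(c*n) - M ≡ n - M [ZMOD t] :=
        (Int.ModEq.symm (Int.modEq_iff_dvd.mpr ⟨-(v*n), by linear_combination n * huv⟩)).sub_right M
      exact e1.trans e2
    rw [key, Int.emod_eq_of_lt (by omega) (by omega)]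
    omega
  · intro m hm
    simp only [Finset.mem_Ico] at hm
    have key : c * (M + (u*m - M) % t) ≡ m [ZMOD t] := by
      have e1 : c * (M + (u*m - M) % t) ≡ c * (M + (u*m - M)) [ZMOD t] :=
        Int.ModEq.mul_left c (Int.ModEq.add_left M
          (Int.emod_emod_of_dvd (u*m-M) (dvd_refl t)))
      have e2 : c * (M + (u*m - M)) ≡ m [ZMOD t] :=
        Int.ModEq.symm (Int.modEq_iff_dvd.mpr ⟨-(v*m), by linear_combination m * huv⟩)
      exact e1.trans e2
    unfold Int.ModEq at key
    rw [key, Int.emod_eq_of_lt (by omega) (by omega)]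
  · intro n hn; rfl

lemma emod_blocks (c t M : ℤ) (q : ℕ) (ht : 0 < t) (hc : IsCoprime c t) :
    2 * ∑ n ∈ Finset.Ico M (M + q*t), (c*n % t) = q * (t * (t-1)) := by
  induction q with
  | zero => simp
  | succ k ih =>
    have h0 : (0:ℤ) ≤ (k:ℤ)*t := by positivity
    have hcast : ((k+1:ℕ):ℤ) * t = (k:ℤ)*t + t := by push_cast; ring
    rw [hcast, ← Finset.Ico_union_Ico_eq_Ico
      (le_add_of_nonneg_right h0) (by linarith [ht.le] : M + (k:ℤ)*t ≤ M + ((k:ℤ)*t + t)),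
      Finset.sum_union (Finset.Ico_disjoint_Ico_consecutive _ _ _)]
    have hb := emod_block c t (M + (k:ℤ)*t) ht hc
    rw [add_assoc] at hb
    push_cast
    simp only [mul_add]
    push_cast at ih
    linarith [ih, hb]

lemma gauss_shift (A : ℤ) (K : ℕ) : 2 * ∑ n ∈ Finset.Ico A (A + (K:ℤ)), n = K*(2*A + K - 1) := by
  induction K with
  | zero => simp
  | succ k ih =>
    have hcast : ((k+1:ℕ):ℤ) = (k:ℤ)+1 := by push_cast; ring
    rw [hcast, show A + ((k:ℤ)+1) = A + ((k:ℤ) + 1) from rfl,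
      ← Finset.Ico_union_Ico_eq_Ico (by simp : A ≤ A + (k:ℤ))
        (by linarith : A + (k:ℤ) ≤ A + ((k:ℤ)+1)),
      Finset.sum_union (Finset.Ico_disjoint_Ico_consecutive _ _ _),
      show Finset.Ico (A+(k:ℤ)) (A+((k:ℤ)+1)) = {A+(k:ℤ)} by ext x; simp [Finset.mem_Ico]; omega,
      Finset.sum_singleton]
    linarith

lemma floor_term (s : ℤ) (t : ℕ) (ht : 0 < t) (n : ℤ) :
    ((⌊(s:ℚ)/(t:ℚ)*(n:ℚ)⌋ : ℤ) : ℚ) = ((s*n : ℤ):ℚ)/(t:ℚ) - ((s*n % (t:ℤ) : ℤ):ℚ)/(t:ℚ) := by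
  have h1 : (s:ℚ)/(t:ℚ)*(n:ℚ) = ((s*n : ℤ):ℚ)/((t:ℕ):ℚ) := by push_cast; ring
  rw [h1, Rat.floor_intCast_div_natCast]
  have h2 := Int.mul_ediv_add_emod (s*n) (t:ℤ)
  have ht' : ((t:ℕ):ℚ) ≠ 0 := by positivity
  rw [div_sub_div_same, eq_div_iff ht']
  have : (((t:ℤ) * (s*n / (t:ℤ)) + s*n % (t:ℤ) : ℤ) : ℚ) = ((s*n : ℤ) : ℚ) := by
    exact_mod_cast congrArg (fun z : ℤ => (z:ℚ)) h2
  push_cast at this ⊢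
  linarith

lemma ceil_term (s : ℤ) (t : ℕ) (ht : 0 < t) (n : ℤ) :
    ((⌈(s:ℚ)/(t:ℚ)*(n:ℚ)⌉ : ℤ) : ℚ) = ((s*n : ℤ):ℚ)/(t:ℚ) + (((-s)*n % (t:ℤ) : ℤ):ℚ)/(t:ℚ) := by
  have h0 : ⌈(s:ℚ)/(t:ℚ)*(n:ℚ)⌉ = -⌊-((s:ℚ)/(t:ℚ)*(n:ℚ))⌋ := by
    rw [← Int.ceil_neg, neg_neg]
  have h1 : -((s:ℚ)/(t:ℚ)*(n:ℚ)) = ((-s):ℚ)/(t:ℚ)*(n:ℚ) := by push_cast; ring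
  rw [h0, h1]
  have := floor_term (-s) t ht n
  push_cast at this ⊢
  rw [this]
  ring

lemma block_eval (a t1 t2 : ℕ) (s1 s2 : ℤ) (A : ℤ) (ht1 : 0 < t1) (ht2 : 0 < t2)
    (h1 : Int.gcd s1 (t1:ℤ) = 1) (h2 : Int.gcd s2 (t2:ℤ) = 1) :
    ((∑ n ∈ Finset.Ico A (A + ((a*t1*t2 : ℕ):ℤ)),
        (⌊(s2:ℚ)/(t2:ℚ)*(n:ℚ)⌋ + 1 - ⌈(s1:ℚ)/(t1:ℚ)*(n:ℚ)⌉) : ℤ) : ℚ)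
      = ((s2:ℚ)/t2 - (s1:ℚ)/t1) * (((a*t1*t2:ℕ):ℚ) * (2*A + ((a*t1*t2:ℕ):ℚ) - 1)/2)
        + (a:ℚ) * ((t1:ℚ)+(t2:ℚ))/2 := by
  have ht1' : ((t1:ℕ):ℚ) ≠ 0 := by positivity
  have ht2' : ((t2:ℕ):ℚ) ≠ 0 := by positivity
  set I := Finset.Ico A (A + ((a*t1*t2 : ℕ):ℤ)) with hI
  -- cast the sum into ℚ and rewrite termwise
  have hterm : ∀ n ∈ I, ((⌊(s2:ℚ)/(t2:ℚ)*(n:ℚ)⌋ + 1 - ⌈(s1:ℚ)/(t1:ℚ)*(n:ℚ)⌉ : ℤ) : ℚ)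
      = ((s2:ℚ)/t2 - (s1:ℚ)/t1) * (n:ℚ) + 1
        - ((s2*n % (t2:ℤ) : ℤ):ℚ)/t2 - (((-s1)*n % (t1:ℤ) : ℤ):ℚ)/t1 := by
    intro n _
    push_cast
    rw [floor_term s2 t2 ht2 n, ceil_term s1 t1 ht1 n]
    push_cast
    ring
  rw [Int.cast_sum, Finset.sum_congr rfl hterm]
  have split : ∑ n ∈ I, (((s2:ℚ)/t2 - (s1:ℚ)/t1) * (n:ℚ) + 1
        - ((s2*n % (t2:ℤ) : ℤ):ℚ)/t2 - (((-s1)*n % (t1:ℤ) : ℤ):ℚ)/t1)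
      = ((s2:ℚ)/t2 - (s1:ℚ)/t1) * (∑ n ∈ I, (n:ℚ)) + (I.card : ℚ)
        - ((∑ n ∈ I, (s2*n % (t2:ℤ))  : ℤ):ℚ)/t2 - ((∑ n ∈ I, ((-s1)*n % (t1:ℤ)) : ℤ):ℚ)/t1 := by
    rw [Finset.mul_sum, Int.cast_sum, Int.cast_sum, Finset.sum_div, Finset.sum_div,
      show ((I.card : ℚ)) = ∑ _n ∈ I, (1:ℚ) by rw [Finset.sum_const]; ring,
      ← Finset.sum_add_distrib, ← Finset.sum_sub_distrib, ← Finset.sum_sub_distrib]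
  rw [split]
  -- numeric inputs
  have hcard : (I.card : ℚ) = ((a*t1*t2:ℕ):ℚ) := by
    rw [hI, Int.card_Ico, show A + ((a*t1*t2:ℕ):ℤ) - A = ((a*t1*t2:ℕ):ℤ) by ring,
      Int.toNat_natCast]
  have hg : ((2 * ∑ n ∈ I, n : ℤ) : ℚ) = ((a*t1*t2:ℕ):ℚ) * (2*A + ((a*t1*t2:ℕ):ℚ) - 1) := by
    rw [hI]
    exact_mod_cast congrArg (fun z : ℤ => (z:ℚ)) (gauss_shift A (a*t1*t2))
  have hgq : (∑ n ∈ I, (n:ℚ)) = ((a*t1*t2:ℕ):ℚ) * (2*A + ((a*t1*t2:ℕ):ℚ) - 1) / 2 := by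
    rw [eq_div_iff (by norm_num : (2:ℚ) ≠ 0)]
    push_cast at hg ⊢
    linarith [hg]
  have hc2 : IsCoprime s2 ((t2:ℕ):ℤ) := Int.isCoprime_iff_gcd_eq_one.mpr h2
  have hc1 : IsCoprime (-s1) ((t1:ℕ):ℤ) := by
    apply Int.isCoprime_iff_gcd_eq_one.mpr
    rw [Int.neg_gcd]
    exact h1
  have hs2 : ((2 * ∑ n ∈ I, (s2*n % (t2:ℤ)) : ℤ) : ℚ) = ((a*t1:ℕ):ℚ) * ((t2:ℚ) * ((t2:ℚ)-1)) := by
    have := emod_blocks s2 (t2:ℤ) A (a*t1) (by exact_mod_cast ht2) hc2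
    rw [hI, show A + ((a*t1*t2 : ℕ):ℤ) = A + ((a*t1 : ℕ):ℤ)*(t2:ℤ) by push_cast; ring]
    exact_mod_cast congrArg (fun z : ℤ => (z:ℚ)) this
  have hs1 : ((2 * ∑ n ∈ I, ((-s1)*n % (t1:ℤ)) : ℤ) : ℚ) = ((a*t2:ℕ):ℚ) * ((t1:ℚ) * ((t1:ℚ)-1)) := by
    have := emod_blocks (-s1) (t1:ℤ) A (a*t2) (by exact_mod_cast ht1) hc1
    rw [hI, show A + ((a*t1*t2 : ℕ):ℤ) = A + ((a*t2 : ℕ):ℤ)*(t1:ℤ) by push_cast; ring]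
    exact_mod_cast congrArg (fun z : ℤ => (z:ℚ)) this
  have e2 : ((∑ n ∈ I, (s2*n % (t2:ℤ)) : ℤ):ℚ)/t2 = ((a*t1:ℕ):ℚ) * ((t2:ℚ)-1)/2 := by
    rw [div_eq_iff ht2']
    push_cast at hs2 ⊢
    linarith [hs2]
  have e1 : ((∑ n ∈ I, ((-s1)*n % (t1:ℤ)) : ℤ):ℚ)/t1 = ((a*t2:ℕ):ℚ) * ((t1:ℚ)-1)/2 := by
    rw [div_eq_iff ht1']
    push_cast at hs1 ⊢
    linarith [hs1]
  rw [e2, e1, hcard, hgq]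
  push_cast
  ring


lemma hull_tri (m1 m2 h : ℚ) (hm : m1 < m2) (hh : 0 < h) :
    convexHull ℚ {![0,0], ![m1*h, h], ![m2*h, h]} =
      {x : Fin 2 → ℚ | 0 ≤ x 1 ∧ x 1 ≤ h ∧ m1 * x 1 ≤ x 0 ∧ x 0 ≤ m2 * x 1} := by
  apply Set.Subset.antisymm
  · apply convexHull_min
    · rintro x (rfl | rfl | rfl) <;> refine ⟨?_, ?_, ?_, ?_⟩ <;> simp <;> nlinarith
    · rintro x ⟨hx0, hx1, hx2, hx3⟩ y ⟨hy0, hy1, hy2, hy3⟩ p q hp hq hpq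
      refine ⟨?_, ?_, ?_, ?_⟩ <;>
        simp only [Pi.add_apply, Pi.smul_apply, smul_eq_mul] <;> nlinarith
  · rintro x ⟨hx0, hx1, hx2, hx3⟩
    rcases eq_or_lt_of_le hx0 with hy | hy
    · have h00 : x 0 = 0 := by rw [← hy] at hx2 hx3; nlinarith
      have : x = ![0,0] := by funext i; fin_cases i <;> simp [h00, ← hy]
      rw [this]
      exact subset_convexHull ℚ _ (by simp)
    · have hx1ne : x 1 ≠ 0 := hy.ne'
      set c : ℚ := (h / x 1) * x 0 with hc
      have hcl : m1 * h ≤ c := by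
        rw [hc]; rw [div_mul_eq_mul_div, le_div_iff₀ hy]; nlinarith
      have hcu : c ≤ m2 * h := by
        rw [hc]; rw [div_mul_eq_mul_div, div_le_iff₀ hy]; nlinarith
      have hd : 0 < (m2 - m1) * h := by nlinarith
      have hq12 : (![c, h] : Fin 2 → ℚ) ∈ segment ℚ ![m1*h, h] ![m2*h, h] := by
        refine ⟨(m2*h - c)/((m2-m1)*h), (c - m1*h)/((m2-m1)*h),
          div_nonneg (by linarith) hd.le, div_nonneg (by linarith) hd.le,
          by rw [← add_div, div_eq_one_iff_eq hd.ne']; ring, ?_⟩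
        funext i; fin_cases i <;>
          simp [Pi.add_apply, Pi.smul_apply, smul_eq_mul, Matrix.cons_val_zero,
            Matrix.cons_val_one, Matrix.head_cons] <;> field_simp [sub_ne_zero.mpr hm.ne'] <;> ring
      have hseg : segment ℚ ![m1*h, h] ![m2*h, h] ⊆ convexHull ℚ {![0,0], ![m1*h, h], ![m2*h, h]} :=
        segment_subset_convexHull (by simp) (by simp)
      have h0m : (![0,0] : Fin 2 → ℚ) ∈ convexHull ℚ {![0,0], ![m1*h, h], ![m2*h, h]} :=
        subset_convexHull ℚ _ (by simp)
      have hxseg : x ∈ segment ℚ (![0,0] : Fin 2 → ℚ) ![c, h] := by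
        refine ⟨1 - x 1/h, x 1/h, by rw [sub_nonneg, div_le_one hh]; exact hx1, by positivity,
          by ring, ?_⟩
        funext i; fin_cases i <;>
          simp [Pi.add_apply, Pi.smul_apply, smul_eq_mul, Matrix.cons_val_zero,
            Matrix.cons_val_one, Matrix.head_cons, hc] <;> field_simp <;> ring
      exact (convex_convexHull ℚ _).segment_subset h0m (hseg hq12) hxseg


lemma smul_slice (m1 m2 h r : ℚ) (hh : 0 < h) (hr : 0 ≤ r) :
    r • {x : Fin 2 → ℚ | 0 ≤ x 1 ∧ x 1 ≤ h ∧ m1 * x 1 ≤ x 0 ∧ x 0 ≤ m2 * x 1} =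
      {x : Fin 2 → ℚ | 0 ≤ x 1 ∧ x 1 ≤ r * h ∧ m1 * x 1 ≤ x 0 ∧ x 0 ≤ m2 * x 1} := by
  rcases eq_or_lt_of_le hr with hr0 | hr0
  · rw [← hr0, Set.zero_smul_set ⟨0, by simp [hh.le]⟩]
    ext x
    simp only [Set.mem_singleton_iff, Set.mem_setOf_eq, zero_mul]
    constructor
    · rintro rfl; simp
    · rintro ⟨a1, a2, a3, a4⟩
      have h1 : x 1 = 0 := le_antisymm a2 a1
      have h0 : x 0 = 0 := by rw [h1] at a3 a4; simp at a3 a4; linarith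
      funext i; fin_cases i <;> simpa
  · ext x
    rw [Set.mem_smul_set_iff_inv_smul_mem₀ hr0.ne']
    simp only [Set.mem_setOf_eq, Pi.smul_apply, smul_eq_mul]
    have hrpos : 0 < r⁻¹ := by positivity
    constructor
    · rintro ⟨a1, a2, a3, a4⟩
      refine ⟨by nlinarith, ?_, by nlinarith, by nlinarith⟩
      calc x 1 = r * (r⁻¹ * x 1) := by field_simp
        _ ≤ r * h := by nlinarith
    · rintro ⟨a1, a2, a3, a4⟩
      refine ⟨by positivity, ?_, by nlinarith, by nlinarith⟩
      calc r⁻¹ * x 1 ≤ r⁻¹ * (r * h) := by nlinarith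
        _ = h := by field_simp

lemma count_slice (m1 m2 H : ℚ) (hm : m1 ≤ m2) (hH : 0 ≤ H) :
    {x : Fin 2 → ℚ | (0 ≤ x 1 ∧ x 1 ≤ H ∧ m1 * x 1 ≤ x 0 ∧ x 0 ≤ m2 * x 1) ∧ IsLatticePt x}.ncard
      = ∑ n ∈ Finset.Icc (0:ℤ) ⌊H⌋, (⌊m2 * (n:ℚ)⌋ + 1 - ⌈m1 * (n:ℚ)⌉).toNat := by
  classical
  set f : ℤ × ℤ → (Fin 2 → ℚ) := fun p => ![(p.1 : ℚ), (p.2 : ℚ)] with hf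
  have hS : ∃ S : Finset (ℤ × ℤ), S =
    (Finset.Icc (0:ℤ) ⌊H⌋).biUnion
      (fun n => (Finset.Icc ⌈m1 * (n:ℚ)⌉ ⌊m2 * (n:ℚ)⌋).image (fun m => (m, n))) := ⟨_, rfl⟩
  obtain ⟨S, hS⟩ := hS
  have hinj : Function.Injective f := by
    intro p q hpq
    have h0 := congrFun hpq 0
    have h1 := congrFun hpq 1
    simp only [hf, Matrix.cons_val_zero, Matrix.cons_val_one, Matrix.head_cons] at h0 h1
    exact Prod.ext (by exact_mod_cast h0) (by exact_mod_cast h1)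
  have hset : {x : Fin 2 → ℚ | (0 ≤ x 1 ∧ x 1 ≤ H ∧ m1 * x 1 ≤ x 0 ∧ x 0 ≤ m2 * x 1) ∧ IsLatticePt x}
      = f '' (S : Set (ℤ × ℤ)) := by
    ext x
    subst hS
    simp only [Set.mem_setOf_eq, Set.mem_image, Finset.coe_biUnion, Finset.mem_coe,
      Finset.mem_biUnion, Finset.mem_image, Finset.mem_Icc, Set.mem_iUnion,
      Finset.coe_image, exists_prop]
    constructor
    · rintro ⟨⟨a1, a2, a3, a4⟩, hlat⟩
      obtain ⟨z0, hz0⟩ := hlat 0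
      obtain ⟨z1, hz1⟩ := hlat 1
      refine ⟨(z0, z1), ⟨z1, ⟨by exact_mod_cast hz1 ▸ a1, Int.le_floor.mpr (hz1 ▸ a2)⟩,
        z0, ⟨Int.ceil_le.mpr (by rw [← hz0, ← hz1]; exact a3),
             Int.le_floor.mpr (by rw [← hz0, ← hz1]; exact a4)⟩, rfl⟩, ?_⟩
      funext i; fin_cases i <;> simp [hf, hz0, hz1]
    · rintro ⟨p, ⟨n, ⟨hn0, hn1⟩, m, ⟨hm0, hm1⟩, rfl⟩, rfl⟩
      have e0 : f (m, n) 0 = (m:ℚ) := by simp [hf]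
      have e1 : f (m, n) 1 = (n:ℚ) := by simp [hf]
      refine ⟨⟨by rw [e1]; exact_mod_cast hn0,
        by rw [e1]; exact le_trans (by exact_mod_cast hn1 : (n:ℚ) ≤ (⌊H⌋:ℚ)) (Int.floor_le H),
        by rw [e0, e1]; exact Int.ceil_le.mp hm0, by rw [e0, e1]; exact Int.le_floor.mp hm1⟩, ?_⟩
      intro j; fin_cases j
      · exact ⟨m, by simp [hf]⟩
      · exact ⟨n, by simp [hf]⟩
  subst hS
  rw [hset, Set.ncard_image_of_injective _ hinj, Set.ncard_coe_finset]
  rw [Finset.card_biUnion]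
  · apply Finset.sum_congr rfl
    intro n _
    rw [Finset.card_image_of_injective _ (fun a b hab => by injection hab), Int.card_Icc]
  · intro i hi j hj hij
    simp only [Finset.disjoint_left, Finset.mem_image]
    rintro p ⟨m, hm, rfl⟩ ⟨m', hm', hpq⟩
    exact hij (by injection hpq with h1 h2; omega)

section main
variable (a b t1 t2 : ℕ) (s1 s2 : ℤ)

lemma count_int (ha : 0 < a) (hb : 0 < b) (ht1 : 0 < t1) (ht2 : 0 < t2)
    (hslope : (s1 : ℚ) / t1 < (s2 : ℚ) / t2) (r : ℚ) (hr : 0 ≤ r) :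
    ((latticeCount (Tri a b s1 s2 t1 t2) r : ℕ) : ℤ)
      = ∑ n ∈ Finset.Icc (0:ℤ) ⌊r*((a:ℚ)/b)⌋,
          (⌊(s2:ℚ)/(t2:ℚ)*(n:ℚ)⌋ + 1 - ⌈(s1:ℚ)/(t1:ℚ)*(n:ℚ)⌉) := by
  have hh : (0:ℚ) < (a:ℚ)/(b:ℚ) := by positivity
  have hrw : Tri a b s1 s2 t1 t2 =
      {x : Fin 2 → ℚ | 0 ≤ x 1 ∧ x 1 ≤ (a:ℚ)/(b:ℚ) ∧ (s1:ℚ)/(t1:ℚ) * x 1 ≤ x 0 ∧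
        x 0 ≤ (s2:ℚ)/(t2:ℚ) * x 1} := hull_tri _ _ _ hslope hh
  have hcount : latticeCount (Tri a b s1 s2 t1 t2) r
      = ∑ n ∈ Finset.Icc (0:ℤ) ⌊r*((a:ℚ)/b)⌋,
          (⌊(s2:ℚ)/(t2:ℚ)*(n:ℚ)⌋ + 1 - ⌈(s1:ℚ)/(t1:ℚ)*(n:ℚ)⌉).toNat := by
    unfold latticeCount
    rw [hrw, smul_slice _ _ _ _ hh hr]
    exact count_slice _ _ _ hslope.le (by positivity)
  rw [hcount]
  rw [Nat.cast_sum]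
  apply Finset.sum_congr rfl
  intro n hn
  simp only [Finset.mem_Icc] at hn
  have hn0 : (0:ℚ) ≤ (n:ℚ) := by exact_mod_cast hn.1
  have hfl : ⌊(s1:ℚ)/(t1:ℚ)*(n:ℚ)⌋ ≤ ⌊(s2:ℚ)/(t2:ℚ)*(n:ℚ)⌋ :=
    Int.floor_le_floor (by nlinarith)
  have hcf : ⌈(s1:ℚ)/(t1:ℚ)*(n:ℚ)⌉ ≤ ⌊(s1:ℚ)/(t1:ℚ)*(n:ℚ)⌋ + 1 := Int.ceil_le_floor_add_one _
  omega

noncomputable def thetaF (r : ℚ) : ℚ := Int.fract (r * ((a:ℚ)/b))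

noncomputable def F1x (r : ℚ) : ℚ :=
  ((a:ℚ)/b) * (((t1:ℚ)+(t2:ℚ))/(2*(t1:ℚ)*(t2:ℚ))
    - (thetaF a b r - 1/2) * ((s2:ℚ)/(t2:ℚ) - (s1:ℚ)/(t1:ℚ)))

noncomputable def F2x : ℚ := ((s2:ℚ)/(t2:ℚ) - (s1:ℚ)/(t1:ℚ))/2 * ((a:ℚ)/(b:ℚ))^2

lemma F1x_shift (hb : 0 < b) (r : ℚ) (m : ℤ) :
    F1x a b t1 t2 s1 s2 (r + (m:ℚ)*(b:ℚ)) = F1x a b t1 t2 s1 s2 r := by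
  unfold F1x thetaF
  have heq : (r + (m:ℚ)*(b:ℚ)) * ((a:ℚ)/b) = r * ((a:ℚ)/b) + ((m*a : ℤ):ℚ) := by
    have hb' : ((b:ℕ):ℚ) ≠ 0 := by positivity
    push_cast
    field_simp
  rw [heq, Int.fract_add_intCast]

lemma star (ha : 0 < a) (hb : 0 < b) (ht1 : 0 < t1) (ht2 : 0 < t2)
    (hslope : (s1 : ℚ) / t1 < (s2 : ℚ) / t2)
    (h1 : Int.gcd s1 (t1:ℤ) = 1) (h2 : Int.gcd s2 (t2:ℤ) = 1) (r : ℚ) (hr : 0 ≤ r) :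
    ((latticeCount (Tri a b s1 s2 t1 t2) (r + ((b*t1*t2 : ℕ):ℚ)) : ℕ) : ℚ)
      - ((latticeCount (Tri a b s1 s2 t1 t2) r : ℕ) : ℚ)
      = ((b*t1*t2 : ℕ):ℚ) * F1x a b t1 t2 s1 s2 r
        + F2x a b t1 t2 s1 s2 * (2*r*((b*t1*t2 : ℕ):ℚ) + ((b*t1*t2 : ℕ):ℚ)^2) := by
  have hh : (0:ℚ) < (a:ℚ)/(b:ℚ) := by positivity
  set N : ℤ := ⌊r*((a:ℚ)/b)⌋ with hN
  have hN0 : 0 ≤ N := Int.floor_nonneg.mpr (by positivity)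
  set K : ℤ := ((a*t1*t2 : ℕ):ℤ) with hK
  have hK0 : 0 ≤ K := by positivity
  have hshift : (r + ((b*t1*t2 : ℕ):ℚ)) * ((a:ℚ)/b) = r * ((a:ℚ)/b) + (K:ℚ) := by
    rw [hK]; push_cast; field_simp
  have hN' : ⌊(r + ((b*t1*t2 : ℕ):ℚ)) * ((a:ℚ)/b)⌋ = N + K := by
    rw [hshift, Int.floor_add_intCast, hN]
  have hc1 := count_int a b t1 t2 s1 s2 ha hb ht1 ht2 hslope r hr
  have hc2 := count_int a b t1 t2 s1 s2 ha hb ht1 ht2 hslope (r + ((b*t1*t2 : ℕ):ℚ))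
    (by positivity)
  rw [hN'] at hc2
  rw [← hN] at hc1
  -- difference of the two sums
  set f : ℤ → ℤ := fun n => (⌊(s2:ℚ)/(t2:ℚ)*(n:ℚ)⌋ + 1 - ⌈(s1:ℚ)/(t1:ℚ)*(n:ℚ)⌉) with hf
  have hIcc1 : Finset.Icc (0:ℤ) N = Finset.Ico (0:ℤ) (N+1) := by ext x; simp
  have hIcc2 : Finset.Icc (0:ℤ) (N+K) = Finset.Ico (0:ℤ) (N+1+K) := by ext x; simp; omega
  have hsplit : ∑ n ∈ Finset.Ico (0:ℤ) (N+1+K), f n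
      = ∑ n ∈ Finset.Ico (0:ℤ) (N+1), f n + ∑ n ∈ Finset.Ico (N+1) (N+1+K), f n := by
    rw [← Finset.Ico_union_Ico_eq_Ico (by omega) (by omega : N+1 ≤ N+1+K),
      Finset.sum_union (Finset.Ico_disjoint_Ico_consecutive _ _ _)]
  have hdiff : ((latticeCount (Tri a b s1 s2 t1 t2) (r + ((b*t1*t2 : ℕ):ℚ)) : ℕ) : ℤ)
      - ((latticeCount (Tri a b s1 s2 t1 t2) r : ℕ) : ℤ)
      = ∑ n ∈ Finset.Ico (N+1) (N+1+K), f n := by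
    rw [hc1, hc2, hIcc1, hIcc2, hsplit]; ring
  have hble := block_eval a t1 t2 s1 s2 (N+1) ht1 ht2 h1 h2
  rw [show N+1+K = N+1+((a*t1*t2:ℕ):ℤ) from by rw [hK]] at hdiff
  have hdq := congrArg (fun z : ℤ => (z:ℚ)) hdiff
  simp only [Int.cast_sub, Int.cast_natCast] at hdq
  rw [hf] at hdq
  rw [hble] at hdq
  rw [hdq]
  -- now pure algebra: express N in terms of r and θ
  have hθ : ((N:ℤ):ℚ) = r * ((a:ℚ)/b) - Int.fract (r * ((a:ℚ)/b)) := by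
    rw [hN, Int.self_sub_fract]
  unfold F1x F2x thetaF
  have hb' : ((b:ℕ):ℚ) ≠ 0 := by positivity
  have ht1' : ((t1:ℕ):ℚ) ≠ 0 := by positivity
  have ht2' : ((t2:ℕ):ℚ) ≠ 0 := by positivity
  push_cast
  push_cast at hθ
  rw [hθ]
  field_simp
  ring
end main

section thm
variable (a b t1 t2 : ℕ) (s1 s2 : ℤ)

theorem main_extract (ha : 0 < a) (hb : 0 < b) (ht1 : 0 < t1) (ht2 : 0 < t2)
    (hslope : (s1 : ℚ) / t1 < (s2 : ℚ) / t2)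
    (h1 : Int.gcd s1 (t1 : ℤ) = 1) (h2 : Int.gcd s2 (t2 : ℤ) = 1)
    (Q : ℕ → ℚ → ℚ)
    (hper : ∀ i, ∃ p : ℚ, 0 < p ∧ ∀ r, Q i (r + p) = Q i r)
    (hsum : ∀ r : ℚ, 0 ≤ r →
      ((latticeCount (Tri a b s1 s2 t1 t2) r : ℕ) : ℚ) = ∑ i ∈ Finset.range 3, Q i r * r ^ i)
    (r : ℚ) (hr : 0 ≤ r) : Q 1 r = F1x a b t1 t2 s1 s2 r := by
  obtain ⟨q0, hq0pos, hq0⟩ := hper 0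
  obtain ⟨q1, hq1pos, hq1⟩ := hper 1
  obtain ⟨q2, hq2pos, hq2⟩ := hper 2
  set p : ℚ := ((b*t1*t2 : ℕ):ℚ) with hpdef
  have hp0 : 0 < p := by rw [hpdef]; positivity
  set F1 : ℚ → ℚ := F1x a b t1 t2 s1 s2 with hF1
  set F2 : ℚ := F2x a b t1 t2 s1 s2 with hF2
  set L : ℚ → ℚ := fun x => ((latticeCount (Tri a b s1 s2 t1 t2) x : ℕ) : ℚ) with hL
  set G : ℚ → ℚ := fun x => L x - F1 x * x - F2 * x^2 with hG
  have hstep : ∀ x : ℚ, 0 ≤ x → G (x + p) = G x := by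
    intro x hx
    have hs := star a b t1 t2 s1 s2 ha hb ht1 ht2 hslope h1 h2 x hx
    have hF1s : F1 (x + p) = F1 x := by
      rw [hF1, hpdef, show ((b*t1*t2 : ℕ):ℚ) = (((t1*t2:ℕ):ℤ):ℚ)*(b:ℚ) by push_cast; ring]
      exact F1x_shift a b t1 t2 s1 s2 hb x _
    simp only [hG]
    rw [hF1s]
    simp only [hL]
    rw [← hF1, ← hF2] at hs
    linear_combination hs
  have hGmul : ∀ k : ℕ, ∀ x : ℚ, 0 ≤ x → G (x + (k:ℚ)*p) = G x := by
    intro k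
    induction k with
    | zero => intro x hx; simp
    | succ m ih =>
      intro x hx
      have hx' : 0 ≤ x + (m:ℚ)*p := by positivity
      have : x + ((m+1:ℕ):ℚ)*p = (x + (m:ℚ)*p) + p := by push_cast; ring
      rw [this, hstep _ hx', ih x hx]
  obtain ⟨W, k0, k1, k2, kw, hW0, hWq0, hWq1, hWq2, hWp⟩ :=
    exists_nat_mult q0 q1 q2 p hq0pos hq1pos hq2pos hp0
  -- the three sample points
  have hx1 : (0:ℚ) ≤ r + W := by linarith
  have hx2 : (0:ℚ) ≤ r + 2*W := by linarith
  -- Q-periodicity at shifts W and 2W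
  have hQ0s : ∀ j : ℕ, Q 0 (r + (j:ℚ)*W) = Q 0 r := by
    intro j
    rw [hWq0, show r + (j:ℚ)*((k0:ℚ)*q0) = r + ((j*k0 : ℕ):ℚ)*q0 by push_cast; ring]
    exact periodic_mul_nat _ _ hq0 _ _
  have hQ1s : ∀ j : ℕ, Q 1 (r + (j:ℚ)*W) = Q 1 r := by
    intro j
    rw [hWq1, show r + (j:ℚ)*((k1:ℚ)*q1) = r + ((j*k1 : ℕ):ℚ)*q1 by push_cast; ring]
    exact periodic_mul_nat _ _ hq1 _ _
  have hQ2s : ∀ j : ℕ, Q 2 (r + (j:ℚ)*W) = Q 2 r := by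
    intro j
    rw [hWq2, show r + (j:ℚ)*((k2:ℚ)*q2) = r + ((j*k2 : ℕ):ℚ)*q2 by push_cast; ring]
    exact periodic_mul_nat _ _ hq2 _ _
  -- G and F1 shifts at W and 2W
  have hGs : ∀ j : ℕ, G (r + (j:ℚ)*W) = G r := by
    intro j
    rw [hWp, show r + (j:ℚ)*((kw:ℚ)*p) = r + ((j*kw : ℕ):ℚ)*p by push_cast; ring]
    exact hGmul _ _ hr
  have hF1s : ∀ j : ℕ, F1 (r + (j:ℚ)*W) = F1 r := by
    intro j
    rw [hF1, hWp, hpdef, show r + (j:ℚ)*((kw:ℚ)*((b*t1*t2 : ℕ):ℚ))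
        = r + (((j*kw*t1*t2 : ℕ):ℤ):ℚ)*(b:ℚ) by push_cast; ring]
    exact F1x_shift a b t1 t2 s1 s2 hb r _
  -- the three equations
  have hpoly : ∀ x : ℚ, 0 ≤ x → L x = Q 0 x + Q 1 x * x + Q 2 x * x^2 := by
    intro x hx
    have := hsum x hx
    simp only [Finset.sum_range_succ, Finset.sum_range_zero, pow_zero, pow_one, zero_add,
      mul_one] at this
    rw [hL]
    linarith [this]
  have eqn : ∀ j : ℕ, Q 0 r + Q 1 r * (r + (j:ℚ)*W) + Q 2 r * (r + (j:ℚ)*W)^2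
      = G r + F1 r * (r + (j:ℚ)*W) + F2 * (r + (j:ℚ)*W)^2 := by
    intro j
    have hxj : (0:ℚ) ≤ r + (j:ℚ)*W := by positivity
    have h1' := hpoly _ hxj
    rw [hQ0s j, hQ1s j, hQ2s j] at h1'
    have h2' : L (r + (j:ℚ)*W) = G (r + (j:ℚ)*W) + F1 (r + (j:ℚ)*W) * (r + (j:ℚ)*W)
        + F2 * (r + (j:ℚ)*W)^2 := by
      simp only [hG]; ring
    rw [hGs j, hF1s j] at h2'
    linarith [h1', h2']
  have e0 := eqn 0
  have e1 := eqn 1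
  have e2 := eqn 2
  simp only [Nat.cast_ofNat, Nat.cast_one, Nat.cast_zero, zero_mul, add_zero, one_mul] at e0 e1 e2
  have hA2 : (Q 2 r - F2) * (2*W^2) = 0 := by linear_combination e2 - 2*e1 + e0
  have hA2' : Q 2 r - F2 = 0 :=
    (mul_eq_zero.mp hA2).resolve_right (by positivity)
  have hA1 : (Q 1 r - F1 r) * W = 0 := by
    linear_combination e1 - e0 - (2*r*W + W^2) * hA2'
  have hA1' : Q 1 r - F1 r = 0 :=
    (mul_eq_zero.mp hA1).resolve_right (by positivity)
  rw [hF1] at hA1'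
  linarith [hA1']
end thm

/-- `|Q₁(T,r)| ≤ Q₁(T,0)` for `0 ≤ r < b·lcm(t₁,t₂)`, and moreover
`Q₁(T,r) ≥ -Q₁(T,0) + a/(bt₁) + a/(bt₂)`. -/
theorem stmt14 (a b t1 t2 : ℕ) (s1 s2 : ℤ) (ha : 0 < a) (hb : 0 < b)
    (ht1 : 0 < t1) (ht2 : 0 < t2) (hslope : (s1 : ℚ) / t1 < (s2 : ℚ) / t2)
    (hab : Nat.Coprime a b) (h1 : Int.gcd s1 (t1 : ℤ) = 1) (h2 : Int.gcd s2 (t2 : ℤ) = 1)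
    (Q : ℕ → ℚ → ℚ) (hQ : IsRatEhrhartCoeffs (Tri a b s1 s2 t1 t2) 2 Q) :
    ∀ r : ℚ, 0 ≤ r → r < (b : ℚ) * (Nat.lcm t1 t2 : ℚ) →
      |Q 1 r| ≤ Q 1 0 ∧
      Q 1 r ≥ -Q 1 0 + (a : ℚ) / ((b : ℚ) * t1) + (a : ℚ) / ((b : ℚ) * t2) := by
  obtain ⟨hper, hsum⟩ := hQ
  have hext : ∀ x : ℚ, 0 ≤ x → Q 1 x = F1x a b t1 t2 s1 s2 x := fun x hx =>
    main_extract a b t1 t2 s1 s2 ha hb ht1 ht2 hslope h1 h2 Q hper hsum x hx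
  intro r hr _hrlt
  rw [hext r hr, hext 0 le_rfl]
  have hθ00 : thetaF a b 0 = 0 := by unfold thetaF; simp
  unfold F1x
  rw [hθ00]
  have hθ0 : 0 ≤ thetaF a b r := Int.fract_nonneg _
  have hθ1 : thetaF a b r < 1 := Int.fract_lt_one _
  have hX : (0:ℚ) < (a:ℚ)/(b:ℚ) := by positivity
  have hD : (0:ℚ) < (s2:ℚ)/(t2:ℚ) - (s1:ℚ)/(t1:ℚ) := sub_pos.mpr hslope
  have hU : (0:ℚ) < ((t1:ℚ)+(t2:ℚ))/(2*(t1:ℚ)*(t2:ℚ)) := by positivity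
  have hkey : (a:ℚ)/((b:ℚ)*(t1:ℚ)) + (a:ℚ)/((b:ℚ)*(t2:ℚ))
      = ((a:ℚ)/(b:ℚ)) * (2 * (((t1:ℚ)+(t2:ℚ))/(2*(t1:ℚ)*(t2:ℚ)))) := by
    have hb' : ((b:ℕ):ℚ) ≠ 0 := by positivity
    have ht1' : ((t1:ℕ):ℚ) ≠ 0 := by positivity
    have ht2' : ((t2:ℕ):ℚ) ≠ 0 := by positivity
    field_simp
    ring
  constructor
  · rw [abs_le]
    constructor
    · nlinarith [mul_pos hX hU, mul_pos hX hD,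
        mul_nonneg (mul_pos hX hD).le (by linarith : (0:ℚ) ≤ 1 - thetaF a b r)]
    · nlinarith [mul_nonneg (mul_pos hX hD).le hθ0]
  · rw [ge_iff_le]
    nlinarith [hkey, mul_nonneg (mul_pos hX hD).le (by linarith : (0:ℚ) ≤ 1 - thetaF a b r)]
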